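/- Let H be a complex Hilbert space and let R = (R_1,…,R_d) be a commuting d-tuple of bounded linear operators on H that is (m,n)-isosymmetric (Λ_{m,n}(R) = 0), with m, n positive integers. Let μ = (μ_1,…,μ_d) and μ′ = (μ′_1,…,μ′_d) in ℂ^d satisfy Σ_{j=1}^{d} μ_j · conj(μ′_j) ≠ 1 and Σ_{j=1}^{d} (μ_j − conj(μ′_j)) ≠ 0. If (u_k) and (v_k) are sequences of unit vectors in H such that ‖(R_j − μ_j)u_k‖ → 0 and ‖(R_j − μ′_j)v_k‖ → 0 as k → ∞ for every j = 1,…,d, then ⟨u_k, v_k⟩ → 0 as k → ∞. -/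

import Mathlib

open Finset ContinuousLinearMap
open scoped InnerProductSpace

variable {H : Type*} [NormedAddCommGroup H] [InnerProductSpace ℂ H] [CompleteSpace H]

/-- `R^γ = R_1^{γ_1} ⋯ R_d^{γ_d}` for a multi-index `γ`. -/
noncomputable def opPow {d : ℕ} (R : Fin d → H →L[ℂ] H) (γ : Fin d → ℕ) : H →L[ℂ] H :=
  (List.ofFn fun i => (R i) ^ (γ i)).prod

/-- `M_m(R) = Σ_{k=0}^{m} (−1)^{m−k} C(m,k) Σ_{|γ|=k} (k!/γ!) R*^γ R^γ`. -/
noncomputable def Mop {d : ℕ} (R : Fin d → H →L[ℂ] H) (m : ℕ) : H →L[ℂ] H :=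
  ∑ k ∈ Finset.range (m + 1), ((-1 : ℂ) ^ (m - k) * (m.choose k : ℂ)) •
    ∑ γ ∈ Finset.Nat.antidiagonalTuple d k,
      ((Nat.multinomial Finset.univ γ : ℕ) : ℂ) •
        (opPow (fun i => ContinuousLinearMap.adjoint (R i)) γ * opPow R γ)

/-- `S_n(R) = Σ_{k=0}^{n} (−1)^{n−k} C(n,k) (R_1*+⋯+R_d*)^k (R_1+⋯+R_d)^{n−k}`. -/
noncomputable def Sop {d : ℕ} (R : Fin d → H →L[ℂ] H) (n : ℕ) : H →L[ℂ] H :=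
  ∑ k ∈ Finset.range (n + 1), ((-1 : ℂ) ^ (n - k) * (n.choose k : ℂ)) •
    ((∑ i, ContinuousLinearMap.adjoint (R i)) ^ k * (∑ i, R i) ^ (n - k))

/-- `Λ_{m,n}(R) = Σ_{k=0}^{n} (−1)^{n−k} C(n,k) (R_1*+⋯+R_d*)^k M_m(R) (R_1+⋯+R_d)^{n−k}`. -/
noncomputable def Lam {d : ℕ} (R : Fin d → H →L[ℂ] H) (m n : ℕ) : H →L[ℂ] H :=
  ∑ k ∈ Finset.range (n + 1), ((-1 : ℂ) ^ (n - k) * (n.choose k : ℂ)) •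
    ((∑ i, ContinuousLinearMap.adjoint (R i)) ^ k * Mop R m * (∑ i, R i) ^ (n - k))

/-! ### Auxiliary notions -/

/-- `A` is approximately scalar `a` on the sequence `w`. -/
def AE (w : ℕ → H) (A : H →L[ℂ] H) (a : ℂ) : Prop :=
  Filter.Tendsto (fun k => A (w k) - a • w k) Filter.atTop (nhds 0)

lemma AE_one (w : ℕ → H) : AE w 1 1 := by
  simp [AE, tendsto_const_nhds]

lemma AE_mul {w : ℕ → H} {A B : H →L[ℂ] H} {a b : ℂ}
    (hA : AE w A a) (hB : AE w B b) : AE w (A * B) (a * b) := by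
  have h1 : Filter.Tendsto (fun k => A (B (w k) - b • w k)) Filter.atTop (nhds 0) := by
    have h := (A.continuous.tendsto 0).comp hB
    rw [map_zero] at h
    exact h
  have h2 : Filter.Tendsto (fun k => b • (A (w k) - a • w k)) Filter.atTop (nhds 0) := by
    simpa using hA.const_smul b
  have key : ∀ k, (A * B) (w k) - (a * b) • w k
      = A (B (w k) - b • w k) + b • (A (w k) - a • w k) := by
    intro k
    simp only [ContinuousLinearMap.mul_apply, map_sub, map_smul, smul_sub, smul_smul]
    rw [mul_comm b a]
    abel
  unfold AE
  rw [show (fun k => (A * B) (w k) - (a * b) • w k)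
      = fun k => A (B (w k) - b • w k) + b • (A (w k) - a • w k) from funext key]
  have h3 := h1.add h2
  rw [add_zero] at h3
  exact h3

lemma AE_pow {w : ℕ → H} {A : H →L[ℂ] H} {a : ℂ} (hA : AE w A a) (k : ℕ) :
    AE w (A ^ k) (a ^ k) := by
  induction k with
  | zero => simpa using AE_one w
  | succ k ih =>
      rw [pow_succ, pow_succ]
      exact AE_mul ih hA

lemma AE_sum {w : ℕ → H} {ι : Type*} (s : Finset ι) (f : ι → H →L[ℂ] H) (g : ι → ℂ)
    (h : ∀ i ∈ s, AE w (f i) (g i)) : AE w (∑ i ∈ s, f i) (∑ i ∈ s, g i) := by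
  unfold AE at *
  have key : (fun k => (∑ i ∈ s, f i) (w k) - (∑ i ∈ s, g i) • w k)
      = fun k => ∑ i ∈ s, (f i (w k) - g i • w k) := by
    funext k
    rw [ContinuousLinearMap.sum_apply, Finset.sum_sub_distrib, Finset.sum_smul]
  rw [key]
  have := tendsto_finset_sum s h
  simpa using this

lemma AE_opPow : ∀ {d : ℕ} {w : ℕ → H} (R : Fin d → H →L[ℂ] H) (c : Fin d → ℂ)
    (γ : Fin d → ℕ), (∀ i, AE w (R i) (c i)) → AE w (opPow R γ) (∏ i, c i ^ γ i)
  | 0, w, R, c, γ, _ => by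
      have : opPow R γ = 1 := by simp [opPow]
      rw [this]
      simpa using AE_one w
  | (d + 1), w, R, c, γ, h => by
      have ih := AE_opPow (fun i => R i.succ) (fun i => c i.succ) (fun i => γ i.succ)
        (fun i => h i.succ)
      have h0 : AE w (R 0 ^ γ 0) (c 0 ^ γ 0) := AE_pow (h 0) _
      have e1 : opPow R γ = R 0 ^ γ 0 * opPow (fun i => R i.succ) (fun i => γ i.succ) := by
        simp [opPow, List.ofFn_succ]
      rw [e1, Fin.prod_univ_succ]
      exact AE_mul h0 ih

lemma commute_opPow {d : ℕ} (X : H →L[ℂ] H) (R : Fin d → H →L[ℂ] H) (γ : Fin d → ℕ)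
    (h : ∀ i, Commute X (R i)) : Commute X (opPow R γ) := by
  apply Commute.list_prod_right
  intro y hy
  obtain ⟨i, rfl⟩ := List.mem_ofFn.mp hy
  exact (h i).pow_right _

lemma star_comm_of_comm {A B : H →L[ℂ] H} (h : Commute A B) :
    Commute (star A) (star B) := by
  show star A * star B = star B * star A
  rw [← star_mul, ← star_mul, h.eq]

lemma opPow_star : ∀ {d : ℕ} (R : Fin d → H →L[ℂ] H),
    (∀ i j, Commute (R i) (R j)) → ∀ (γ : Fin d → ℕ),
    opPow (fun i => star (R i)) γ = star (opPow R γ)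
  | 0, R, _, γ => by simp [opPow]
  | (d + 1), R, hc, γ => by
      have hsc : ∀ i j, Commute (star (R i)) (star (R j)) :=
        fun i j => star_comm_of_comm (hc i j)
      have e1 : opPow R γ = R 0 ^ γ 0 * opPow (fun i => R i.succ) (fun i => γ i.succ) := by
        simp [opPow, List.ofFn_succ]
      have e2 : opPow (fun i => star (R i)) γ
          = star (R 0) ^ γ 0 * opPow (fun i => star (R i.succ)) (fun i => γ i.succ) := by
        simp [opPow, List.ofFn_succ]
      rw [e1, e2, star_mul, star_pow,
        ← opPow_star (fun i => R i.succ) (fun i j => hc i.succ j.succ) (fun i => γ i.succ)]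
      exact (commute_opPow (star (R 0) ^ γ 0) _ _
        (fun i => ((hsc 0 i.succ).pow_left _))).eq

lemma opPow_adjoint {d : ℕ} (R : Fin d → H →L[ℂ] H)
    (hc : ∀ i j, Commute (R i) (R j)) (γ : Fin d → ℕ) :
    opPow (fun i => ContinuousLinearMap.adjoint (R i)) γ = star (opPow R γ) := by
  rw [← opPow_star R hc γ]
  simp only [ContinuousLinearMap.star_eq_adjoint]

lemma inner_tendsto_zero_left {x y : ℕ → H} {M : ℝ}
    (hx : Filter.Tendsto x Filter.atTop (nhds 0)) (hy : ∀ k, ‖y k‖ ≤ M) :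
    Filter.Tendsto (fun k => (⟪x k, y k⟫_ℂ : ℂ)) Filter.atTop (nhds 0) := by
  exact squeeze_zero_norm
    (fun k => (norm_inner_le_norm _ _).trans
      (mul_le_mul_of_nonneg_left (hy k) (norm_nonneg _)))
    (by simpa using hx.norm.mul_const M)

lemma inner_tendsto_zero_right {x y : ℕ → H} {M : ℝ}
    (hx : Filter.Tendsto x Filter.atTop (nhds 0)) (hy : ∀ k, ‖y k‖ ≤ M) :
    Filter.Tendsto (fun k => (⟪y k, x k⟫_ℂ : ℂ)) Filter.atTop (nhds 0) := by
  exact squeeze_zero_norm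
    (fun k => (norm_inner_le_norm _ _).trans
      (mul_le_mul_of_nonneg_right (hy k) (norm_nonneg _)))
    (by simpa using hx.norm.const_mul M)

/-- `⟪A v_k, u_k⟫ - c ⟪v_k, u_k⟫ → 0`. -/
def QP (u v : ℕ → H) (A : H →L[ℂ] H) (c : ℂ) : Prop :=
  Filter.Tendsto (fun k => (⟪A (v k), u k⟫_ℂ : ℂ) - c * ⟪v k, u k⟫_ℂ)
    Filter.atTop (nhds 0)

lemma QP_one (u v : ℕ → H) : QP u v 1 1 := by
  simp [QP, tendsto_const_nhds]

lemma QP_smul {u v : ℕ → H} {A : H →L[ℂ] H} {c : ℂ} (r : ℂ) (h : QP u v A c) :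
    QP u v (r • A) ((starRingEnd ℂ) r * c) := by
  unfold QP at *
  have key : (fun k => (⟪(r • A) (v k), u k⟫_ℂ : ℂ)
        - ((starRingEnd ℂ) r * c) * ⟪v k, u k⟫_ℂ)
      = fun k => (starRingEnd ℂ) r * ((⟪A (v k), u k⟫_ℂ : ℂ) - c * ⟪v k, u k⟫_ℂ) := by
    funext k
    simp [inner_smul_left]
    ring
  rw [key]
  simpa using h.const_mul ((starRingEnd ℂ) r)

lemma QP_sum {u v : ℕ → H} {ι : Type*} (s : Finset ι) (f : ι → H →L[ℂ] H) (g : ι → ℂ)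
    (h : ∀ i ∈ s, QP u v (f i) (g i)) : QP u v (∑ i ∈ s, f i) (∑ i ∈ s, g i) := by
  unfold QP at *
  have key : (fun k => (⟪(∑ i ∈ s, f i) (v k), u k⟫_ℂ : ℂ)
        - (∑ i ∈ s, g i) * ⟪v k, u k⟫_ℂ)
      = fun k => ∑ i ∈ s, ((⟪f i (v k), u k⟫_ℂ : ℂ) - g i * ⟪v k, u k⟫_ℂ) := by
    funext k
    rw [ContinuousLinearMap.sum_apply, sum_inner, Finset.sum_sub_distrib, Finset.sum_mul]
  rw [key]
  simpa using tendsto_finset_sum s h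

lemma QP_conj {u v : ℕ → H} (hu : ∀ k, ‖u k‖ = 1) (hv : ∀ k, ‖v k‖ = 1)
    {A B X : H →L[ℂ] H} {a b c : ℂ}
    (hA : AE v A a) (hB : AE u B b) (hX : QP u v X c) :
    QP u v (star B * X * A) ((starRingEnd ℂ) a * b * c) := by
  unfold QP at *
  have key : ∀ k, (⟪(star B * X * A) (v k), u k⟫_ℂ : ℂ)
        - ((starRingEnd ℂ) a * b * c) * ⟪v k, u k⟫_ℂ
      = (⟪X (A (v k) - a • v k), B (u k)⟫_ℂ : ℂ)
        + (starRingEnd ℂ) a * ⟪X (v k), B (u k) - b • u k⟫_ℂ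
        + ((starRingEnd ℂ) a * b) * ((⟪X (v k), u k⟫_ℂ : ℂ) - c * ⟪v k, u k⟫_ℂ) := by
    intro k
    simp only [ContinuousLinearMap.mul_apply, ContinuousLinearMap.star_eq_adjoint,
      ContinuousLinearMap.adjoint_inner_left, map_sub, map_smul,
      inner_sub_left, inner_sub_right, inner_smul_left, inner_smul_right]
    ring
  have t1 : Filter.Tendsto (fun k => (⟪X (A (v k) - a • v k), B (u k)⟫_ℂ : ℂ))
      Filter.atTop (nhds 0) := by
    apply inner_tendsto_zero_left (M := ‖B‖)
    · have h := (X.continuous.tendsto 0).comp hA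
      rw [map_zero] at h
      exact h
    · intro k
      calc ‖B (u k)‖ ≤ ‖B‖ * ‖u k‖ := B.le_opNorm _
        _ = ‖B‖ := by rw [hu k, mul_one]
  have t2 : Filter.Tendsto
      (fun k => (starRingEnd ℂ) a * (⟪X (v k), B (u k) - b • u k⟫_ℂ : ℂ))
      Filter.atTop (nhds 0) := by
    have h0 : Filter.Tendsto (fun k => (⟪X (v k), B (u k) - b • u k⟫_ℂ : ℂ))
        Filter.atTop (nhds 0) := by
      apply inner_tendsto_zero_right (M := ‖X‖) hB
      intro k
      calc ‖X (v k)‖ ≤ ‖X‖ * ‖v k‖ := X.le_opNorm _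
        _ = ‖X‖ := by rw [hv k, mul_one]
    simpa using h0.const_mul ((starRingEnd ℂ) a)
  have t3 : Filter.Tendsto
      (fun k => ((starRingEnd ℂ) a * b) * ((⟪X (v k), u k⟫_ℂ : ℂ) - c * ⟪v k, u k⟫_ℂ))
      Filter.atTop (nhds 0) := by
    simpa using hX.const_mul ((starRingEnd ℂ) a * b)
  rw [show (fun k => (⟪(star B * X * A) (v k), u k⟫_ℂ : ℂ)
        - ((starRingEnd ℂ) a * b * c) * ⟪v k, u k⟫_ℂ)
      = fun k => (⟪X (A (v k) - a • v k), B (u k)⟫_ℂ : ℂ)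
        + (starRingEnd ℂ) a * ⟪X (v k), B (u k) - b • u k⟫_ℂ
        + ((starRingEnd ℂ) a * b) * ((⟪X (v k), u k⟫_ℂ : ℂ) - c * ⟪v k, u k⟫_ℂ)
      from funext key]
  have t4 := (t1.add t2).add t3
  rw [add_zero, add_zero] at t4
  exact t4

/-- asymptotic orthogonality of joint approximate eigenvectors of an
`(m,n)`-isosymmetric multioperator. -/
theorem approx_eigenvectors_asymptotically_orthogonal {d : ℕ}
    (R : Fin d → H →L[ℂ] H)
    (hcomm : ∀ i j, Commute (R i) (R j)) (m n : ℕ) (hm : 0 < m) (hn : 0 < n)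
    (hiso : Lam R m n = 0) (μ μ' : Fin d → ℂ)
    (h1 : ∑ j, μ j * (starRingEnd ℂ) (μ' j) ≠ 1)
    (h2 : ∑ j, (μ j - (starRingEnd ℂ) (μ' j)) ≠ 0)
    (u v : ℕ → H) (hu : ∀ k, ‖u k‖ = 1) (hv : ∀ k, ‖v k‖ = 1)
    (hut : ∀ j, Filter.Tendsto (fun k => ‖R j (u k) - μ j • u k‖) Filter.atTop (nhds 0))
    (hvt : ∀ j, Filter.Tendsto (fun k => ‖R j (v k) - μ' j • v k‖) Filter.atTop (nhds 0)) :
    Filter.Tendsto (fun k => (⟪u k, v k⟫_ℂ : ℂ)) Filter.atTop (nhds 0) := by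
  classical
  set T : H →L[ℂ] H := ∑ i, R i with hT
  set s : ℂ := ∑ i, μ i with hs
  set s' : ℂ := ∑ i, μ' i with hs'
  set z : ℂ := ∑ j, μ j * (starRingEnd ℂ) (μ' j) with hz
  have hAEu : ∀ i, AE u (R i) (μ i) :=
    fun i => tendsto_zero_iff_norm_tendsto_zero.mpr (hut i)
  have hAEv : ∀ i, AE v (R i) (μ' i) :=
    fun i => tendsto_zero_iff_norm_tendsto_zero.mpr (hvt i)
  have hTu : AE u T s := AE_sum _ _ _ (fun i _ => hAEu i)
  have hTv : AE v T s' := AE_sum _ _ _ (fun i _ => hAEv i)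
  -- QP for Mop
  have hMop : QP u v (Mop R m) ((z - 1) ^ m) := by
    have hγ : ∀ γ : Fin d → ℕ, QP u v
        (((Nat.multinomial Finset.univ γ : ℕ) : ℂ) •
          (opPow (fun i => ContinuousLinearMap.adjoint (R i)) γ * opPow R γ))
        (((Nat.multinomial Finset.univ γ : ℕ) : ℂ) * ∏ i, (μ i * (starRingEnd ℂ) (μ' i)) ^ γ i)
        := by
      intro γ
      have hA : AE v (opPow R γ) (∏ i, μ' i ^ γ i) := AE_opPow _ _ _ hAEv
      have hB : AE u (opPow R γ) (∏ i, μ i ^ γ i) := AE_opPow _ _ _ hAEu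
      have h0 := QP_conj hu hv hA hB (QP_one u v)
      rw [mul_one, mul_one] at h0
      have hconst : (starRingEnd ℂ) (∏ i, μ' i ^ γ i) * ∏ i, μ i ^ γ i
          = ∏ i, (μ i * (starRingEnd ℂ) (μ' i)) ^ γ i := by
        rw [map_prod, ← Finset.prod_mul_distrib]
        exact Finset.prod_congr rfl fun i _ => by rw [map_pow, ← mul_pow, mul_comm]
      rw [hconst] at h0
      rw [opPow_adjoint R hcomm γ]
      have h1 := QP_smul ((Nat.multinomial Finset.univ γ : ℕ) : ℂ) h0
      simpa using h1
    have hzk : ∀ k : ℕ,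
        ∑ γ ∈ Finset.Nat.antidiagonalTuple d k,
          (((Nat.multinomial Finset.univ γ : ℕ) : ℂ)
            * ∏ i, (μ i * (starRingEnd ℂ) (μ' i)) ^ γ i) = z ^ k := by
      intro k
      rw [← Finset.piAntidiag_univ_fin_eq_antidiagonalTuple k d]
      exact (Finset.sum_pow_eq_sum_piAntidiag Finset.univ
        (fun i => μ i * (starRingEnd ℂ) (μ' i)) k).symm
    have hinner : ∀ k : ℕ, QP u v
        (((-1 : ℂ) ^ (m - k) * (m.choose k : ℂ)) •
          ∑ γ ∈ Finset.Nat.antidiagonalTuple d k,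
            ((Nat.multinomial Finset.univ γ : ℕ) : ℂ) •
              (opPow (fun i => ContinuousLinearMap.adjoint (R i)) γ * opPow R γ))
        (((-1 : ℂ) ^ (m - k) * (m.choose k : ℂ)) * z ^ k) := by
      intro k
      have hsum := QP_sum (Finset.Nat.antidiagonalTuple d k) _ _ (fun γ _ => hγ γ)
      rw [hzk k] at hsum
      have := QP_smul ((-1 : ℂ) ^ (m - k) * (m.choose k : ℂ)) hsum
      have hc : (starRingEnd ℂ) ((-1 : ℂ) ^ (m - k) * (m.choose k : ℂ))
          = (-1 : ℂ) ^ (m - k) * (m.choose k : ℂ) := by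
        simp [map_mul, map_pow]
      rwa [hc] at this
    have hfin := QP_sum (Finset.range (m + 1)) _ _ (fun k _ => hinner k)
    have hbin : ∑ k ∈ Finset.range (m + 1),
        ((-1 : ℂ) ^ (m - k) * (m.choose k : ℂ)) * z ^ k = (z - 1) ^ m := by
      rw [show z - 1 = z + (-1) by ring, add_pow]
      exact Finset.sum_congr rfl fun k _ => by ring
    rw [hbin] at hfin
    exact hfin
  -- QP for Lam
  have hstar : (∑ i, ContinuousLinearMap.adjoint (R i)) = star T := by
    rw [hT, star_sum]
    simp [ContinuousLinearMap.star_eq_adjoint]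
  have hterm : ∀ k : ℕ, QP u v
      (((-1 : ℂ) ^ (n - k) * (n.choose k : ℂ)) •
        ((∑ i, ContinuousLinearMap.adjoint (R i)) ^ k * Mop R m * T ^ (n - k)))
      (((-1 : ℂ) ^ (n - k) * (n.choose k : ℂ)) *
        ((starRingEnd ℂ) (s' ^ (n - k)) * s ^ k * (z - 1) ^ m)) := by
    intro k
    have hA : AE v (T ^ (n - k)) (s' ^ (n - k)) := AE_pow hTv _
    have hB : AE u (T ^ k) (s ^ k) := AE_pow hTu _
    have h0 := QP_conj hu hv hA hB hMop
    have hop : (∑ i, ContinuousLinearMap.adjoint (R i)) ^ k * Mop R m * T ^ (n - k)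
        = star (T ^ k) * Mop R m * T ^ (n - k) := by
      rw [hstar, star_pow]
    rw [hop]
    have := QP_smul ((-1 : ℂ) ^ (n - k) * (n.choose k : ℂ)) h0
    have hc : (starRingEnd ℂ) ((-1 : ℂ) ^ (n - k) * (n.choose k : ℂ))
        = (-1 : ℂ) ^ (n - k) * (n.choose k : ℂ) := by
      simp [map_mul, map_pow]
    rw [hc] at this
    exact this
  have hLam : QP u v (Lam R m n)
      ((s - (starRingEnd ℂ) s') ^ n * (z - 1) ^ m) := by
    have hfin := QP_sum (Finset.range (n + 1)) _ _ (fun k _ => hterm k)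
    have hbin : ∑ k ∈ Finset.range (n + 1),
        ((-1 : ℂ) ^ (n - k) * (n.choose k : ℂ)) *
          ((starRingEnd ℂ) (s' ^ (n - k)) * s ^ k * (z - 1) ^ m)
        = (s - (starRingEnd ℂ) s') ^ n * (z - 1) ^ m := by
      rw [show s - (starRingEnd ℂ) s' = s + (-(starRingEnd ℂ) s') by ring, add_pow,
        Finset.sum_mul]
      refine Finset.sum_congr rfl fun k _ => ?_
      rw [map_pow, neg_pow]
      ring
    rw [hbin] at hfin
    exact hfin
  -- conclude
  set C : ℂ := (s - (starRingEnd ℂ) s') ^ n * (z - 1) ^ m with hC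
  have hCne : C ≠ 0 := by
    have hsub : s - (starRingEnd ℂ) s' = ∑ j, (μ j - (starRingEnd ℂ) (μ' j)) := by
      rw [hs, hs', map_sum, Finset.sum_sub_distrib]
    apply mul_ne_zero
    · exact pow_ne_zero _ (by rw [hsub]; exact h2)
    · exact pow_ne_zero _ (sub_ne_zero.mpr h1)
  have h0 : Filter.Tendsto (fun k => C * (⟪v k, u k⟫_ℂ : ℂ)) Filter.atTop (nhds 0) := by
    have h' := hLam
    rw [hiso] at h'
    unfold QP at h'
    have := h'.neg
    simpa using this
  have hvu : Filter.Tendsto (fun k => (⟪v k, u k⟫_ℂ : ℂ)) Filter.atTop (nhds 0) := by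
    have := h0.const_mul C⁻¹
    simpa [inv_mul_cancel_left₀ hCne] using this
  rw [tendsto_zero_iff_norm_tendsto_zero]
  have hsym : (fun k => ‖(⟪u k, v k⟫_ℂ : ℂ)‖) = fun k => ‖(⟪v k, u k⟫_ℂ : ℂ)‖ := by
    funext k
    exact norm_inner_symm _ _
  rw [hsym]
  simpa using hvu.norm
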